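/- For δ ∈ (0, π/2), the function z ↦ tanh(z)/z (with value 1 at z = 0) is holomorphic on the strip {z ∈ ℂ : |Im z| ≤ δ} and satisfies |tanh(z)/z| ≤ tan(δ)/δ there, with the maximum of |tanh(z)/z| over the strip attained at z = iδ. -/

import Mathlib

open Real Complex

/-- auxiliary: `sinh x ≤ x * cosh x` for `0 ≤ x`. -/
lemma aux_sinh_le_mul_cosh (x : ℝ) (hx : 0 ≤ x) : Real.sinh x ≤ x * Real.cosh x := by
  have h : MonotoneOn (fun t : ℝ => t * Real.cosh t - Real.sinh t) (Set.Ici 0) := by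
    apply monotoneOn_of_deriv_nonneg (convex_Ici 0)
    · exact ((continuous_id.mul Real.continuous_cosh).sub Real.continuous_sinh).continuousOn
    · intro t _
      exact ((differentiableAt_id.mul Real.differentiable_cosh.differentiableAt).sub
        Real.differentiable_sinh.differentiableAt).differentiableWithinAt
    · intro t ht
      rw [interior_Ici] at ht
      have hd : HasDerivAt (fun t : ℝ => t * Real.cosh t - Real.sinh t) (t * Real.sinh t) t := by
        have h2 := ((hasDerivAt_id t).mul (Real.hasDerivAt_cosh t)).sub (Real.hasDerivAt_sinh t)
        exact (h2.congr_deriv (by simp only [id, one_mul]; ring)).congr_of_eventuallyEq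
          (Filter.Eventually.of_forall fun x => rfl)
      rw [hd.deriv]
      exact mul_nonneg ht.le (Real.sinh_nonneg_iff.2 ht.le)
  have h2 := h Set.self_mem_Ici (Set.mem_Ici.2 hx) hx
  simp only [zero_mul, Real.sinh_zero, sub_zero, zero_sub, neg_nonpos] at h2
  linarith [h2]

/-- auxiliary: monotonicity of `tan t / t`. -/
lemma aux_tan_mul (δ : ℝ) (hδ0 : 0 < δ) (hδ2 : δ < Real.pi / 2) :
    ∀ y, 0 ≤ y → y ≤ δ → Real.tan y * δ ≤ Real.tan δ * y := by
  have mono : StrictMonoOn (fun t => Real.tan t / t) (Set.Ioo 0 (Real.pi / 2)) := by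
    apply strictMonoOn_of_deriv_pos (convex_Ioo _ _)
    · intro t ht
      have hc : Real.cos t ≠ 0 :=
        (Real.cos_pos_of_mem_Ioo ⟨by linarith [ht.1, Real.pi_pos], ht.2⟩).ne'
      exact ((Real.continuousAt_tan.2 hc).div continuousAt_id ht.1.ne').continuousWithinAt
    · intro t ht
      rw [interior_Ioo] at ht
      obtain ⟨ht0, ht2⟩ := ht
      have hcpos : 0 < Real.cos t := Real.cos_pos_of_mem_Ioo ⟨by linarith [Real.pi_pos], ht2⟩
      have hd : deriv (fun t => Real.tan t / t) t =
          (1 / Real.cos t ^ 2 * t - Real.tan t * 1) / t ^ 2 := by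
        rw [deriv_fun_div (Real.differentiableAt_tan.2 hcpos.ne') differentiableAt_fun_id ht0.ne',
          Real.deriv_tan, deriv_id'']
      rw [hd]
      apply div_pos _ (pow_pos ht0 2)
      have hnum : 1 / Real.cos t ^ 2 * t - Real.tan t * 1 =
          (t - Real.sin t * Real.cos t) / Real.cos t ^ 2 := by
        rw [Real.tan_eq_sin_div_cos]
        field_simp
      rw [hnum]
      apply div_pos _ (pow_pos hcpos 2)
      have hs := Real.sin_lt ht0
      have hs0 : 0 < Real.sin t := Real.sin_pos_of_pos_of_lt_pi ht0 (by linarith [Real.pi_pos])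
      have hc1 : Real.cos t ≤ 1 := Real.cos_le_one t
      nlinarith
  intro y hy0 hyδ
  rcases eq_or_lt_of_le hy0 with h0 | h0
  · rw [← h0]
    simp [Real.tan_zero]
  rcases eq_or_lt_of_le hyδ with h1 | h1
  · rw [h1]
  · have h2 := mono (Set.mem_Ioo.2 ⟨h0, lt_trans h1 hδ2⟩) (Set.mem_Ioo.2 ⟨hδ0, hδ2⟩) h1
    simp only at h2
    rw [div_lt_div_iff₀ h0 hδ0] at h2
    linarith

lemma aux_cosh_decomp (z : ℂ) : Complex.cosh z =
    ((Real.cosh z.re * Real.cos z.im : ℝ) : ℂ) + ((Real.sinh z.re * Real.sin z.im : ℝ) : ℂ) * I := by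
  conv_lhs => rw [← Complex.re_add_im z]
  rw [Complex.cosh_add, Complex.cosh_mul_I, Complex.sinh_mul_I]
  push_cast [← Complex.ofReal_cosh, ← Complex.ofReal_cos, ← Complex.ofReal_sinh,
    ← Complex.ofReal_sin]
  ring

lemma aux_sinh_decomp (z : ℂ) : Complex.sinh z =
    ((Real.sinh z.re * Real.cos z.im : ℝ) : ℂ) + ((Real.cosh z.re * Real.sin z.im : ℝ) : ℂ) * I := by
  conv_lhs => rw [← Complex.re_add_im z]
  rw [Complex.sinh_add, Complex.cosh_mul_I, Complex.sinh_mul_I]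
  push_cast [← Complex.ofReal_cosh, ← Complex.ofReal_cos, ← Complex.ofReal_sinh,
    ← Complex.ofReal_sin]
  ring

lemma aux_cosh_ne_zero (w : ℂ) (hw : |w.im| < Real.pi / 2) : Complex.cosh w ≠ 0 := by
  intro h
  have hre : (Complex.cosh w).re = Real.cosh w.re * Real.cos w.im := by
    rw [aux_cosh_decomp]
    simp only [Complex.add_re, Complex.mul_re, Complex.ofReal_re, Complex.ofReal_im,
      Complex.I_re, Complex.I_im]
    ring
  rw [h] at hre
  simp only [Complex.zero_re] at hre
  have h1 := abs_lt.1 hw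
  have hpos : 0 < Real.cosh w.re * Real.cos w.im :=
    mul_pos (Real.cosh_pos _) (Real.cos_pos_of_mem_Ioo ⟨h1.1, h1.2⟩)
  linarith

set_option maxHeartbeats 1000000 in
/-- The function tanh(z)/z (with value 1 at 0) is holomorphic on the strip |Im z| ≤ δ,
bounded there by tan δ / δ, with maximum modulus attained at z = iδ. -/
theorem tanh_div_self_strip (δ : ℝ) (hδ : δ ∈ Set.Ioo 0 (Real.pi / 2))
    (f : ℂ → ℂ) (hf : ∀ z : ℂ, f z = if z = 0 then 1 else Complex.tanh z / z) :
    DifferentiableOn ℂ f {z : ℂ | |z.im| ≤ δ} ∧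
    (∀ z : ℂ, |z.im| ≤ δ → ‖f z‖ ≤ Real.tan δ / δ) ∧
    IsMaxOn (fun z : ℂ => ‖f z‖) {z : ℂ | |z.im| ≤ δ} ((δ : ℂ) * Complex.I) := by
  obtain ⟨hδ0, hδ2⟩ := hδ
  have hT : δ < Real.tan δ := Real.lt_tan hδ0 hδ2
  have hTpos : 0 < Real.tan δ := lt_trans hδ0 hT
  -- differentiability off zero
  have hdiff_ne : ∀ w : ℂ, w ≠ 0 → |w.im| < Real.pi / 2 → DifferentiableAt ℂ f w := by
    intro w hw0 hw
    have htanh : DifferentiableAt ℂ Complex.tanh w := by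
      have heq : Complex.tanh = fun u => Complex.sinh u / Complex.cosh u :=
        funext fun u => Complex.tanh_eq_sinh_div_cosh u
      rw [heq]
      exact (Complex.differentiable_sinh w).div (Complex.differentiable_cosh w)
        (aux_cosh_ne_zero w hw)
    have hg : DifferentiableAt ℂ (fun u => Complex.tanh u / u) w :=
      htanh.div differentiableAt_id hw0
    apply hg.congr_of_eventuallyEq
    filter_upwards [isOpen_compl_singleton.mem_nhds hw0] with u hu
    have hu0 : u ≠ 0 := by simpa using hu
    rw [hf u, if_neg hu0]
  -- differentiability at zero via removable singularity
  have hdiff0 : DifferentiableAt ℂ f 0 := by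
    have htendsto : Filter.Tendsto f (nhdsWithin 0 {(0 : ℂ)}ᶜ) (nhds 1) := by
      have hd1 : HasDerivAt Complex.tanh 1 0 := by
        have h2 := (Complex.hasDerivAt_sinh 0).div (Complex.hasDerivAt_cosh 0)
          (by rw [Complex.cosh_zero]; exact one_ne_zero)
        have heq : (Complex.sinh / Complex.cosh) = Complex.tanh :=
          funext fun u => (Complex.tanh_eq_sinh_div_cosh u).symm
        rw [heq] at h2
        simpa using h2
      have hslope := hasDerivAt_iff_tendsto_slope.1 hd1
      apply hslope.congr'
      filter_upwards [self_mem_nhdsWithin] with u hu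
      have hu0 : u ≠ 0 := hu
      rw [slope_def_field, hf u, if_neg hu0, Complex.tanh_zero]
      field_simp
      ring
    have hcont : ContinuousAt f 0 := by
      rw [← continuousWithinAt_compl_self]
      unfold ContinuousWithinAt
      rw [hf 0, if_pos rfl]
      exact htendsto
    have hde : ∀ᶠ w in nhdsWithin (0 : ℂ) {(0 : ℂ)}ᶜ, DifferentiableAt ℂ f w := by
      have hball : ∀ᶠ w in nhds (0 : ℂ), ‖w‖ < 1 := by
        have : Metric.ball (0 : ℂ) 1 ∈ nhds (0 : ℂ) := Metric.ball_mem_nhds 0 one_pos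
        filter_upwards [this] with w hw
        simpa [Complex.dist_eq] using hw
      filter_upwards [eventually_nhdsWithin_of_eventually_nhds hball, self_mem_nhdsWithin]
        with w hw hw0
      apply hdiff_ne w hw0
      calc |w.im| ≤ ‖w‖ := Complex.abs_im_le_norm w
        _ < 1 := hw
        _ < Real.pi / 2 := by nlinarith [Real.pi_gt_three]
    exact (Complex.analyticAt_of_differentiable_on_punctured_nhds_of_continuousAt hde
      hcont).differentiableAt
  have hDiff : DifferentiableOn ℂ f {z : ℂ | |z.im| ≤ δ} := by
    intro z hz
    rcases eq_or_ne z 0 with rfl | hz0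
    · exact hdiff0.differentiableWithinAt
    · exact (hdiff_ne z hz0 (lt_of_le_of_lt hz hδ2)).differentiableWithinAt
  -- the bound
  have hbound : ∀ z : ℂ, |z.im| ≤ δ → ‖f z‖ ≤ Real.tan δ / δ := by
    intro z hz
    rcases eq_or_ne z 0 with rfl | hz0
    · rw [hf 0, if_pos rfl]
      simp only [norm_one]
      rw [le_div_iff₀ hδ0]
      linarith
    · rw [hf z, if_neg hz0]
      set x := z.re with hx
      set y := z.im with hy
      have hcy : 0 < Real.cos y :=
        Real.cos_pos_of_mem_Ioo ⟨by nlinarith [abs_lt.1 (lt_of_le_of_lt hz hδ2)],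
          lt_of_le_of_lt (le_abs_self y) (lt_of_le_of_lt hz hδ2)⟩
      -- key real inequalities
      have hA : Real.sinh x ^ 2 ≤ x ^ 2 * Real.cosh x ^ 2 := by
        rcases le_or_gt 0 x with h | h
        · have h1 := aux_sinh_le_mul_cosh x h
          have h2 : 0 ≤ Real.sinh x := Real.sinh_nonneg_iff.2 h
          nlinarith
        · have h1 := aux_sinh_le_mul_cosh (-x) (by linarith)
          rw [Real.sinh_neg, Real.cosh_neg] at h1
          have h2 : 0 ≤ -Real.sinh x := by
            rw [← Real.sinh_neg]; exact Real.sinh_nonneg_iff.2 (by linarith)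
          nlinarith
      have hB : δ ^ 2 * Real.sin y ^ 2 ≤ Real.tan δ ^ 2 * (y ^ 2 * Real.cos y ^ 2) := by
        have h1 := aux_tan_mul δ hδ0 hδ2 |y| (abs_nonneg y) hz
        have hcabs : Real.cos |y| = Real.cos y := Real.cos_abs y
        have htan : Real.tan |y| = Real.sin |y| / Real.cos y := by
          rw [Real.tan_eq_sin_div_cos, hcabs]
        rw [htan, div_mul_eq_mul_div, div_le_iff₀ hcy] at h1
        -- h1 : sin |y| * δ ≤ tan δ * |y| * cos y
        have hsin_nonneg : 0 ≤ Real.sin |y| := by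
          apply Real.sin_nonneg_of_nonneg_of_le_pi (abs_nonneg y)
          linarith [Real.pi_pos, lt_of_le_of_lt hz hδ2]
        have hsq : (Real.sin |y| * δ) ^ 2 ≤ (Real.tan δ * |y| * Real.cos y) ^ 2 := by
          apply pow_le_pow_left₀ (by positivity) h1
        have hsin2 : Real.sin |y| ^ 2 = Real.sin y ^ 2 := by
          rcases abs_cases y with ⟨h, _⟩ | ⟨h, _⟩ <;> rw [h] <;> simp [Real.sin_neg]
        have habs2 : |y| ^ 2 = y ^ 2 := sq_abs y
        have e : (Real.sin |y| * δ) ^ 2 = δ ^ 2 * Real.sin y ^ 2 := by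
          rw [mul_pow, hsin2]; ring
        have e2 : (Real.tan δ * |y| * Real.cos y) ^ 2 = Real.tan δ ^ 2 * (y ^ 2 * Real.cos y ^ 2) := by
          rw [mul_pow, mul_pow, habs2]; ring
        linarith [hsq, e.ge, e2.le]
      -- modulus computations
      have habs_sinh : ‖Complex.sinh z‖ ^ 2 =
          (Real.sinh x * Real.cos y) ^ 2 + (Real.cosh x * Real.sin y) ^ 2 := by
        rw [Complex.sq_norm, aux_sinh_decomp, Complex.normSq_add_mul_I]
      have habs_cosh : ‖Complex.cosh z‖ ^ 2 =
          (Real.cosh x * Real.cos y) ^ 2 + (Real.sinh x * Real.sin y) ^ 2 := by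
        rw [Complex.sq_norm, aux_cosh_decomp, Complex.normSq_add_mul_I]
      have habs_z : ‖z‖ ^ 2 = x ^ 2 + y ^ 2 := by
        rw [Complex.sq_norm, Complex.normSq_apply]
        ring
      have hcosh_ne : Complex.cosh z ≠ 0 := aux_cosh_ne_zero z (lt_of_le_of_lt hz hδ2)
      have hzpos : 0 < ‖z‖ := norm_pos_iff.2 hz0
      have hcoshpos : 0 < ‖Complex.cosh z‖ := norm_pos_iff.2 hcosh_ne
      -- main squared inequality
      have hmain : (‖Complex.sinh z‖) ^ 2 * δ ^ 2 ≤
          Real.tan δ ^ 2 * ((‖Complex.cosh z‖) ^ 2 * (‖z‖) ^ 2) := by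
        rw [habs_sinh, habs_cosh, habs_z]
        have hTsq : δ ^ 2 ≤ Real.tan δ ^ 2 := by nlinarith
        have e1 : δ ^ 2 * Real.cos y ^ 2 * Real.sinh x ^ 2 ≤
            δ ^ 2 * Real.cos y ^ 2 * (x ^ 2 * Real.cosh x ^ 2) :=
          mul_le_mul_of_nonneg_left hA (by positivity)
        have e3 : δ ^ 2 * (x ^ 2 * Real.cosh x ^ 2 * Real.cos y ^ 2) ≤
            Real.tan δ ^ 2 * (x ^ 2 * Real.cosh x ^ 2 * Real.cos y ^ 2) :=
          mul_le_mul_of_nonneg_right hTsq (by positivity)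
        have e4 : Real.cosh x ^ 2 * (δ ^ 2 * Real.sin y ^ 2) ≤
            Real.cosh x ^ 2 * (Real.tan δ ^ 2 * (y ^ 2 * Real.cos y ^ 2)) :=
          mul_le_mul_of_nonneg_left hB (by positivity)
        nlinarith [e1, e3, e4, mul_nonneg (mul_nonneg (sq_nonneg (Real.tan δ))
          (by positivity : (0:ℝ) ≤ x ^ 2 + y ^ 2)) (sq_nonneg (Real.sinh x * Real.sin y))]
      -- conclude
      have habsf : ‖Complex.tanh z / z‖ =
          ‖Complex.sinh z‖ / (‖Complex.cosh z‖ * ‖z‖) := by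
        rw [Complex.tanh_eq_sinh_div_cosh, norm_div, norm_div]
        ring
      rw [habsf, div_le_div_iff₀ (by positivity) hδ0]
      have hsq : (‖Complex.sinh z‖ * δ) ^ 2 ≤
          (Real.tan δ * (‖Complex.cosh z‖ * ‖z‖)) ^ 2 := by
        nlinarith [hmain]
      have h1 : 0 ≤ ‖Complex.sinh z‖ * δ := by positivity
      have h2 : 0 ≤ Real.tan δ * (‖Complex.cosh z‖ * ‖z‖) := by positivity
      have h3 := Real.sqrt_le_sqrt hsq
      rwa [Real.sqrt_sq h1, Real.sqrt_sq h2] at h3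
  refine ⟨hDiff, hbound, ?_⟩
  -- maximum at iδ
  have hpt : ‖f ((δ : ℂ) * Complex.I)‖ = Real.tan δ / δ := by
    have hne : (δ : ℂ) * Complex.I ≠ 0 :=
      mul_ne_zero (Complex.ofReal_ne_zero.2 hδ0.ne') Complex.I_ne_zero
    rw [hf _, if_neg hne, Complex.tanh_mul_I, mul_div_mul_right _ _ Complex.I_ne_zero,
      ← Complex.ofReal_tan, ← Complex.ofReal_div, Complex.norm_real, Real.norm_eq_abs]
    exact abs_of_pos (by positivity)
  intro z hz
  simp only [Set.mem_setOf_eq] at hz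
  calc ‖f z‖ ≤ Real.tan δ / δ := hbound z hz
    _ = ‖f ((δ : ℂ) * Complex.I)‖ := hpt.symm
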